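/- Let p be a prime number, let K = ℚ(√p) be the real quadratic field realized as the subfield of ℝ generated over ℚ by the positive real square root a = √p of p. Then the two diagonal quadratic forms in 8 variables over K, q₊(x) = x₁² + x₂² + x₃² + x₄² + a·(x₅² + x₆² + x₇² + x₈²) and q₋(x) = x₁² + x₂² + x₃² + x₄² − a·(x₅² + x₆² + x₇² + x₈²), are not equivalent (i.e., there is no K-linear isometry equivalence between them). -/
import Mathlib


open IntermediateField

set_option synthInstance.maxHeartbeats 1000000
set_option maxHeartbeats 1000000

/-- Let `p` be a prime, `K = ℚ(√p) ⊆ ℝ` the real quadratic field generated by the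
positive square root `a = √p`.  Then the diagonal quadratic forms
`x₁²+x₂²+x₃²+x₄² + a(x₅²+x₆²+x₇²+x₈²)` and `x₁²+x₂²+x₃²+x₄² - a(x₅²+x₆²+x₇²+x₈²)`
over `K` are not equivalent. -/
theorem pfister_forms_not_equivalent
    (p : ℕ) (hp : p.Prime)
    (K : IntermediateField ℚ ℝ) (hK : K = ℚ⟮Real.sqrt (p : ℝ)⟯)
    (a : K) (ha : (a : ℝ) = Real.sqrt p) :
    ¬ QuadraticMap.Equivalent
        (QuadraticMap.weightedSumSquares K
          (fun i : Fin 8 => if (i : ℕ) < 4 then (1 : K) else a))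
        (QuadraticMap.weightedSumSquares K
          (fun i : Fin 8 => if (i : ℕ) < 4 then (1 : K) else -a)) := by
  intro ⟨e⟩
  have hapos : (0 : ℝ) < (a : ℝ) := by
    rw [ha]; exact Real.sqrt_pos.mpr (by exact_mod_cast hp.pos)
  set Q₁ := QuadraticMap.weightedSumSquares K
      (fun i : Fin 8 => if (i : ℕ) < 4 then (1 : K) else a)
  set y : Fin 8 → K := Pi.single (4 : Fin 8) 1 with hy
  have hQ₂y : QuadraticMap.weightedSumSquares K
      (fun i : Fin 8 => if (i : ℕ) < 4 then (1 : K) else -a) y = -a := by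
    rw [QuadraticMap.weightedSumSquares_apply]
    rw [Finset.sum_eq_single (4 : Fin 8)]
    · simp only [hy, Pi.single_eq_same, mul_one, smul_eq_mul]
      rw [if_neg (by decide)]
    · intro i _ hi
      simp [hy, Pi.single_eq_of_ne hi]
    · simp
  have key : Q₁ (e.symm y) = -a := by
    rw [e.symm.map_app y]; exact hQ₂y
  -- Q₁ of anything is nonnegative as a real number
  have hnn : (0 : ℝ) ≤ ((Q₁ (e.symm y) : K) : ℝ) := by
    rw [QuadraticMap.weightedSumSquares_apply]
    simp only [smul_eq_mul]
    push_cast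
    apply Finset.sum_nonneg
    intro i _
    by_cases h4 : (i : ℕ) < 4
    · rw [if_pos h4]
      push_cast
      nlinarith [mul_self_nonneg ((e.symm y i : ℝ))]
    · rw [if_neg h4]
      push_cast
      nlinarith [mul_self_nonneg ((e.symm y i : ℝ))]
  rw [key] at hnn
  push_cast at hnn
  linarith
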